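/- Fix y ∈ H and define, for real h near 0, the perturbed covariance operator Γ(h) = (1/(N+h)) (∑_{k∈U} Y_k ⊗ Y_k + h·(y ⊗ y)) − μ(h) ⊗ μ(h) with μ(h) = (1/(N+h)) (∑_{k∈U} Y_k + h·y). Let λ_j be an eigenvalue of Γ with unit eigenvector v_j, and suppose h ↦ λ(h) ∈ ℝ and h ↦ w(h) ∈ H are defined near 0 with λ(0) = λ_j, w(0) = v_j, ‖w(h)‖ = 1 and Γ(h) w(h) = λ(h) w(h) for all h near 0, and that w is differentiable at 0. Then λ is differentiable at h = 0 with derivative λ′(0) = (1/N)(⟨y − μ, v_j⟩² − λ_j); that is, the influence function of the eigenvalue λ_j is Iλ_j(M, y) = (1/N)(⟨y − μ, v_j⟩² − λ_j). -/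

import Mathlib

open scoped RealInnerProductSpace
open Filter Topology

noncomputable section

/-- The rank-one operator `a ⊗ b : u ↦ ⟪a, u⟫ • b`. -/
def tens {H : Type*} [NormedAddCommGroup H] [InnerProductSpace ℝ H] (a b : H) :
    H →L[ℝ] H := (innerSL ℝ a).smulRight b

lemma tens_apply {H : Type*} [NormedAddCommGroup H] [InnerProductSpace ℝ H] (a b u : H) :
    tens a b u = ⟪a, u⟫ • b := rfl

/-- `tens` as a continuous bilinear map. -/
def tensL (H : Type*) [NormedAddCommGroup H] [InnerProductSpace ℝ H] :
    H →L[ℝ] H →L[ℝ] (H →L[ℝ] H) :=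
  (ContinuousLinearMap.smulRightL ℝ H H).comp (innerSL ℝ)

lemma tensL_apply {H : Type*} [NormedAddCommGroup H] [InnerProductSpace ℝ H] (a b : H) :
    tensL H a b = tens a b := rfl

set_option maxHeartbeats 1000000 in
/-- Let `λ_j` be an eigenvalue of `Γ` with unit eigenvector `v_j`, and suppose that
`h ↦ λ(h)` and `h ↦ w(h)` satisfy `λ(0) = λ_j`, `w(0) = v_j`, `‖w(h)‖ = 1` and
`Γ(h) w(h) = λ(h) w(h)` for all `h` near `0`, with `w` differentiable at `0`, where `Γ(h)` is
the perturbed covariance operator.  Then `λ` is differentiable at `0` with derivative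
`λ′(0) = (1/N)(⟪y − μ, v_j⟫² − λ_j)`: the influence function of the eigenvalue is
`Iλ_j(M, y) = (1/N)(⟪y − μ, v_j⟫² − λ_j)`. -/
theorem influence_function_of_eigenvalue
    {H : Type*} [NormedAddCommGroup H] [InnerProductSpace ℝ H] [CompleteSpace H]
    (N : ℕ) (hN : 0 < N) (Y : Fin N → H)
    (μ : H) (hμ : μ = (N : ℝ)⁻¹ • ∑ k, Y k)
    (Γ : H →L[ℝ] H) (hΓ : Γ = (N : ℝ)⁻¹ • ∑ k, tens (Y k - μ) (Y k - μ))
    (y : H)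
    (μf : ℝ → H) (hμf : ∀ h, μf h = ((N : ℝ) + h)⁻¹ • (∑ k, Y k + h • y))
    (Γf : ℝ → H →L[ℝ] H)
    (hΓf : ∀ h, Γf h = ((N : ℝ) + h)⁻¹ • (∑ k, tens (Y k) (Y k) + h • tens y y)
        - tens (μf h) (μf h))
    (lamj : ℝ) (vj : H) (hvj : ‖vj‖ = 1) (heig : Γ vj = lamj • vj)
    (lamF : ℝ → ℝ) (w : ℝ → H)
    (hlam0 : lamF 0 = lamj) (hw0 : w 0 = vj)
    (hnear : ∀ᶠ h in 𝓝 (0 : ℝ), ‖w h‖ = 1 ∧ Γf h (w h) = lamF h • w h)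
    (hwdiff : DifferentiableAt ℝ w 0) :
    HasDerivAt lamF ((N : ℝ)⁻¹ * (⟪y - μ, vj⟫ ^ 2 - lamj)) 0 := by
  have hN0 : (N : ℝ) ≠ 0 := Nat.cast_ne_zero.mpr hN.ne'
  have hS₀ : ∑ k, Y k = (N : ℝ) • μ := by
    rw [hμ, smul_smul, mul_inv_cancel₀ hN0, one_smul]
  -- derivative of the scalar factor
  have hc : HasDerivAt (fun h : ℝ => ((N : ℝ) + h)⁻¹) (-1 / ((N : ℝ) + 0) ^ 2) 0 := by
    have h1 : HasDerivAt (fun h : ℝ => (N : ℝ) + h) 1 0 := (hasDerivAt_id 0).const_add _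
    exact h1.inv (by simpa using hN0)
  -- derivative of μf
  set μ' : H := (N : ℝ)⁻¹ • (y - μ) with hμ'def
  have hμf' : HasDerivAt μf μ' 0 := by
    have hv : HasDerivAt (fun h : ℝ => (∑ k, Y k) + h • y) y 0 := by
      simpa using ((hasDerivAt_id (0:ℝ)).smul_const y).const_add (∑ k, Y k)
    have h2 := hc.smul hv
    rw [show μf = fun h : ℝ => ((N : ℝ) + h)⁻¹ • ((∑ k, Y k) + h • y) from funext hμf]
    convert h2 using 1
    · rfl
    rw [hS₀, hμ'def]
    match_scalars <;> (field_simp; try ring)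
  have hμf0 : μf 0 = μ := by
    rw [hμf, hμ]; simp
  -- derivative of Γf
  set Γ' : H →L[ℝ] H :=
    (((N : ℝ) + 0)⁻¹ • tens y y
        + (-1 / ((N : ℝ) + 0) ^ 2) • ((∑ k, tens (Y k) (Y k)) + (0:ℝ) • tens y y))
      - (tensL H μ' μ + tensL H μ μ') with hΓ'def
  have hΓf' : HasDerivAt Γf Γ' 0 := by
    have hv : HasDerivAt (fun h : ℝ => (∑ k, tens (Y k) (Y k)) + h • tens y y) (tens y y) 0 := by
      simpa using ((hasDerivAt_id (0:ℝ)).smul_const (tens y y)).const_add (∑ k, tens (Y k) (Y k))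
    have h1 := hc.smul hv
    have hm1 : HasDerivAt (fun h => tensL H (μf h)) (tensL H μ') 0 := by
      have h0 : HasFDerivAt (E := H) (F := H →L[ℝ] (H →L[ℝ] H)) (𝕜 := ℝ)
          (fun x : H => tensL H x) (tensL H) (μf 0) := ContinuousLinearMap.hasFDerivAt _
      exact HasFDerivAt.comp_hasDerivAt (l := fun x : H => tensL H x) (f := μf) (0:ℝ) h0 hμf'
    have h2 : HasDerivAt (fun h => tensL H (μf h) (μf h)) (tensL H μ' μ + tensL H μ μ') 0 := by
      have := hm1.clm_apply hμf'
      rwa [hμf0] at this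
    have h3 := h1.sub h2
    rw [show Γf = fun h : ℝ =>
        ((N : ℝ) + h)⁻¹ • ((∑ k, tens (Y k) (Y k)) + h • tens y y) - tensL H (μf h) (μf h)
      from funext hΓf]
    exact h3
  -- Γf 0 = Γ
  have hΓf0 : Γf 0 = Γ := by
    ext u
    rw [hΓf, hμf0, hΓ]
    simp only [ContinuousLinearMap.sub_apply, ContinuousLinearMap.smul_apply,
      ContinuousLinearMap.add_apply, ContinuousLinearMap.sum_apply, tens_apply,
      inner_sub_left, sub_smul, smul_sub, Finset.sum_sub_distrib, zero_smul, add_zero]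
    have e1 : ∑ k, ⟪μ, u⟫ • Y k = ⟪μ, u⟫ • ((N:ℝ) • μ) := by
      rw [← Finset.smul_sum, hS₀]
    have e2 : ∑ k, ⟪Y k, u⟫ • μ = ((N:ℝ) * ⟪μ, u⟫) • μ := by
      rw [← Finset.sum_smul, ← sum_inner, hS₀, inner_smul_left]
      norm_num
    have e3 : ∑ _k : Fin N, ⟪μ, u⟫ • μ = (N : ℝ) • ⟪μ, u⟫ • μ := by
      rw [Finset.sum_const, Finset.card_univ, Fintype.card_fin, ← Nat.cast_smul_eq_nsmul ℝ]
    rw [e1, e2, e3]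
    match_scalars <;> field_simp <;> ring
  -- derivative of w
  have hw : HasDerivAt w (deriv w 0) 0 := hwdiff.hasDerivAt
  set w' : H := deriv w 0 with hw'def
  -- orthogonality ⟪vj, w'⟫ = 0
  have horth : ⟪vj, w'⟫ = 0 := by
    have h1 : HasDerivAt (fun h => ⟪w h, w h⟫) (⟪w 0, w'⟫ + ⟪w', w 0⟫) 0 := hw.inner ℝ hw
    have h2 : (fun h => ⟪w h, w h⟫) =ᶠ[𝓝 (0:ℝ)] fun _ => (1:ℝ) := by
      filter_upwards [hnear] with h hh
      rw [real_inner_self_eq_norm_sq, hh.1]; norm_num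
    have h3 : HasDerivAt (fun _ : ℝ => (1:ℝ)) (⟪w 0, w'⟫ + ⟪w', w 0⟫) 0 :=
      h1.congr_of_eventuallyEq h2.symm
    have h4 := h3.unique (hasDerivAt_const 0 1)
    rw [hw0] at h4
    have h5 := real_inner_comm vj w'
    linarith
  have horth' : ⟪w', vj⟫ = 0 := by rw [real_inner_comm]; exact horth
  -- symmetry of Γ
  have hsym : ⟪vj, Γ w'⟫ = ⟪Γ vj, w'⟫ := by
    rw [hΓ]
    simp only [ContinuousLinearMap.smul_apply, ContinuousLinearMap.sum_apply, tens_apply,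
      inner_smul_left, inner_smul_right, inner_sum, sum_inner, RCLike.star_def, conj_trivial,
      smul_eq_mul]
    congr 1
    apply Finset.sum_congr rfl
    intro k _
    rw [real_inner_comm (Y k - μ) vj]
    ring
  -- the function F h = ⟪w h, Γf h (w h)⟫
  have hGw : HasDerivAt (fun h => Γf h (w h)) (Γ' (w 0) + Γf 0 w') 0 := hΓf'.clm_apply hw
  have hF : HasDerivAt (fun h => ⟪w h, Γf h (w h)⟫)
      (⟪w 0, Γ' (w 0) + Γf 0 w'⟫ + ⟪w', Γf 0 (w 0)⟫) 0 := hw.inner ℝ hGw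
  have heq : lamF =ᶠ[𝓝 (0:ℝ)] fun h => ⟪w h, Γf h (w h)⟫ := by
    filter_upwards [hnear] with h hh
    rw [hh.2, real_inner_smul_right, real_inner_self_eq_norm_sq, hh.1]
    norm_num
  have hmain : HasDerivAt lamF (⟪w 0, Γ' (w 0) + Γf 0 w'⟫ + ⟪w', Γf 0 (w 0)⟫) 0 :=
    hF.congr_of_eventuallyEq heq
  convert hmain using 1
  -- now compute the derivative value
  rw [hw0, hΓf0, heig]
  have h5 : ⟪vj, Γ w'⟫ = 0 := by
    rw [hsym, heig, inner_smul_left]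
    simp [horth]
  rw [inner_add_right, h5, add_zero, real_inner_smul_right, horth', mul_zero, add_zero]
  -- remaining: (N)⁻¹ * (⟪y - μ, vj⟫ ^ 2 - lamj) = ⟪vj, Γ' vj⟫
  have hAvj : ⟪vj, (∑ k, tens (Y k) (Y k)) vj⟫ = ∑ k, ⟪Y k, vj⟫ ^ 2 := by
    simp only [ContinuousLinearMap.sum_apply, tens_apply, inner_sum, inner_smul_right]
    apply Finset.sum_congr rfl
    intro k _
    rw [real_inner_comm vj (Y k)]; ring
  have hb : ∑ k, ⟪Y k, vj⟫ = (N:ℝ) * ⟪μ, vj⟫ := by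
    rw [← sum_inner, hS₀, inner_smul_left]; norm_num
  have hsum : ∑ k, ⟪Y k, vj⟫ ^ 2 = (N:ℝ) * lamj + (N:ℝ) * ⟪μ, vj⟫ ^ 2 := by
    have e0 : ⟪vj, Γ vj⟫ = lamj := by
      rw [heig, real_inner_smul_right, real_inner_self_eq_norm_sq, hvj]; norm_num
    rw [hΓ] at e0
    simp only [ContinuousLinearMap.smul_apply, ContinuousLinearMap.sum_apply, tens_apply,
      inner_smul_right, inner_sum, smul_eq_mul] at e0
    have e1 : ∑ k, ⟪Y k - μ, vj⟫ * ⟪vj, Y k - μ⟫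
        = ∑ k, (⟪Y k, vj⟫ ^ 2 - 2 * ⟪μ, vj⟫ * ⟪Y k, vj⟫ + ⟪μ, vj⟫ ^ 2) := by
      apply Finset.sum_congr rfl
      intro k _
      rw [show ⟪vj, Y k - μ⟫ = ⟪Y k - μ, vj⟫ from real_inner_comm _ _, inner_sub_left]
      ring
    rw [e1, Finset.sum_add_distrib, Finset.sum_sub_distrib, ← Finset.mul_sum, hb,
      Finset.sum_const, Finset.card_univ, Fintype.card_fin, nsmul_eq_mul] at e0
    field_simp at e0
    nlinarith [e0]
  rw [hΓ'def]
  simp only [ContinuousLinearMap.sub_apply, ContinuousLinearMap.add_apply,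
    ContinuousLinearMap.smul_apply, tensL_apply, tens_apply, zero_smul, add_zero,
    inner_add_right, inner_sub_right, inner_smul_right, real_inner_smul_right]
  rw [hAvj, hsum]
  have hμ'1 : ⟪μ', vj⟫ = (N:ℝ)⁻¹ * (⟪y, vj⟫ - ⟪μ, vj⟫) := by
    rw [hμ'def, real_inner_smul_left, inner_sub_left]
  have hμ'2 : ⟪vj, μ'⟫ = (N:ℝ)⁻¹ * (⟪y, vj⟫ - ⟪μ, vj⟫) := by
    rw [show ⟪vj, μ'⟫ = ⟪μ', vj⟫ from real_inner_comm _ _]; exact hμ'1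
  rw [hμ'1, hμ'2,
    show ⟪vj, y⟫ = ⟪y, vj⟫ from real_inner_comm _ _,
    show ⟪vj, μ⟫ = ⟪μ, vj⟫ from real_inner_comm _ _,
    inner_sub_left]
  field_simp
  ring
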